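/- Let φ and ψ be probability measures on a measurable space A and n > 0 a natural number. If there exists a bounded measurable function χ : Aⁿ → [0,1] with ∫ χ d(φ^{⊗n}) = 0 and ∫ χ d(ψ^{⊗n}) = 1, then there exists a bounded measurable function χ' : A → [0,1] with ∫ χ' dφ = 0 and ∫ χ' dψ = 1. -/

import Mathlib

open MeasureTheory

private lemma key_aux {A : Type*} [MeasurableSpace A] :
    ∀ n : ℕ, ∀ (φ ψ : Measure A), IsProbabilityMeasure φ → IsProbabilityMeasure ψ →
    ∀ S : Set (Fin (n + 1) → A), MeasurableSet S →
    (Measure.pi fun _ : Fin (n + 1) => φ) S = 0 →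
    (Measure.pi fun _ : Fin (n + 1) => ψ) S = 1 →
    ∃ T : Set A, MeasurableSet T ∧ φ T = 0 ∧ ψ T = 1 := by
  intro n
  induction n with
  | zero =>
    intro φ ψ _ _ S hS h0 h1
    let e := MeasurableEquiv.funUnique (Fin 1) A
    have hpre : ∀ s : Set (Fin 1 → A), e ⁻¹' (e.symm ⁻¹' s) = s := fun s => by
      ext x; simp only [Set.mem_preimage, MeasurableEquiv.symm_apply_apply]
    refine ⟨e.symm ⁻¹' S, e.symm.measurable hS, ?_, ?_⟩
    · have h := (measurePreserving_funUnique φ (Fin 1)).measure_preimage_equiv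
        (e.symm ⁻¹' S)
      rw [hpre] at h
      rw [← h]; exact h0
    · have h := (measurePreserving_funUnique ψ (Fin 1)).measure_preimage_equiv
        (e.symm ⁻¹' S)
      rw [hpre] at h
      rw [← h]; exact h1
  | succ n ih =>
    intro φ ψ hφ hψ S hS h0 h1
    let e := MeasurableEquiv.piFinSuccAbove (fun _ : Fin (n + 2) => A) 0
    have hpre : ∀ s : Set (Fin (n + 2) → A), e ⁻¹' (e.symm ⁻¹' s) = s := fun s => by
      ext x; simp only [Set.mem_preimage, MeasurableEquiv.symm_apply_apply]
    set S' : Set (A × (Fin (n + 1) → A)) := e.symm ⁻¹' S with hS'def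
    have hS' : MeasurableSet S' := e.symm.measurable hS
    have hpφ := (measurePreserving_piFinSuccAbove
      (fun _ : Fin (n + 2) => φ) 0).map_eq
    have hpψ := (measurePreserving_piFinSuccAbove
      (fun _ : Fin (n + 2) => ψ) 0).map_eq
    have h0' : (φ.prod (Measure.pi fun _ : Fin (n + 1) => φ)) S' = 0 := by
      have h := (measurePreserving_piFinSuccAbove
        (fun _ : Fin (n + 2) => φ) 0).measure_preimage_equiv S'
      rw [hS'def, hpre] at h
      rw [hS'def, ← h]; exact h0
    have h1' : (ψ.prod (Measure.pi fun _ : Fin (n + 1) => ψ)) S' = 1 := by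
      have h := (measurePreserving_piFinSuccAbove
        (fun _ : Fin (n + 2) => ψ) 0).measure_preimage_equiv S'
      rw [hS'def, hpre] at h
      rw [hS'def, ← h]; exact h1
    have h1c : (ψ.prod (Measure.pi fun _ : Fin (n + 1) => ψ)) S'ᶜ = 0 :=
      (prob_compl_eq_zero_iff hS').mpr h1'
    have hfmeas : Measurable fun a =>
        (Measure.pi fun _ : Fin (n + 1) => φ) (Prod.mk a ⁻¹' S') :=
      measurable_measure_prodMk_left hS'
    have hgmeas : Measurable fun a =>
        (Measure.pi fun _ : Fin (n + 1) => ψ) (Prod.mk a ⁻¹' S'ᶜ) :=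
      measurable_measure_prodMk_left hS'.compl
    set N₁ : Set A :=
      {a | (Measure.pi fun _ : Fin (n + 1) => φ) (Prod.mk a ⁻¹' S') ≠ 0} with hN₁def
    set N₂ : Set A :=
      {a | (Measure.pi fun _ : Fin (n + 1) => ψ) (Prod.mk a ⁻¹' S'ᶜ) ≠ 0} with hN₂def
    have hN₁m : MeasurableSet N₁ := hfmeas (measurableSet_singleton 0) |>.compl
    have hN₂m : MeasurableSet N₂ := hgmeas (measurableSet_singleton 0) |>.compl
    have hφN₁ : φ N₁ = 0 := by
      have h := (Measure.measure_prod_null hS').mp h0'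
      rw [Filter.EventuallyEq, ae_iff] at h
      simpa [hN₁def] using h
    have hψN₂ : ψ N₂ = 0 := by
      have h := (Measure.measure_prod_null hS'.compl).mp h1c
      rw [Filter.EventuallyEq, ae_iff] at h
      simpa [hN₂def] using h
    by_cases hcase : ψ N₁ = 1
    · exact ⟨N₁, hN₁m, hφN₁, hcase⟩
    · have hlt : ψ (N₁ ∪ N₂) < 1 := by
        calc ψ (N₁ ∪ N₂) ≤ ψ N₁ + ψ N₂ := measure_union_le _ _
        _ = ψ N₁ := by rw [hψN₂, add_zero]
        _ < 1 := lt_of_le_of_ne prob_le_one hcase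
      have hne : N₁ ∪ N₂ ≠ Set.univ := by
        intro h
        rw [h, measure_univ] at hlt
        exact lt_irrefl _ hlt
      obtain ⟨a, ha⟩ : ∃ a, a ∉ N₁ ∪ N₂ := by
        by_contra h
        push_neg at h
        exact hne (Set.eq_univ_of_forall h)
      have ha₁ : (Measure.pi fun _ : Fin (n + 1) => φ) (Prod.mk a ⁻¹' S') = 0 := by
        have := fun h' => ha (Or.inl h'); simpa [hN₁def] using this
      have ha₂ : (Measure.pi fun _ : Fin (n + 1) => ψ) (Prod.mk a ⁻¹' S')ᶜ = 0 := by
        have := fun h' => ha (Or.inr h'); simpa [hN₂def, Set.preimage_compl] using this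
      have ha₂' : (Measure.pi fun _ : Fin (n + 1) => ψ) (Prod.mk a ⁻¹' S') = 1 :=
        (prob_compl_eq_zero_iff (measurable_prodMk_left hS')).mp ha₂
      exact ih φ ψ hφ hψ _ (measurable_prodMk_left hS') ha₁ ha₂'

/-- If `χ : Aⁿ → [0,1]` anti-distinguishes the `n`-fold product measures
`φ^{⊗n}` from `ψ^{⊗n}`, then some `χ' : A → [0,1]` anti-distinguishes `φ` from `ψ`. -/
theorem antidistinguish_of_tensor_powers
    {A : Type*} [MeasurableSpace A] (φ ψ : Measure A)
    [IsProbabilityMeasure φ] [IsProbabilityMeasure ψ]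
    (n : ℕ) (hn : 0 < n)
    (χ : (Fin n → A) → ℝ) (hχ : Measurable χ)
    (hχ0 : ∀ a, 0 ≤ χ a) (hχ1 : ∀ a, χ a ≤ 1)
    (h0 : ∫ a, χ a ∂(Measure.pi fun _ : Fin n => φ) = 0)
    (h1 : ∫ a, χ a ∂(Measure.pi fun _ : Fin n => ψ) = 1) :
    ∃ χ' : A → ℝ, Measurable χ' ∧ (∀ a, 0 ≤ χ' a) ∧ (∀ a, χ' a ≤ 1) ∧
      (∫ a, χ' a ∂φ) = 0 ∧ (∫ a, χ' a ∂ψ) = 1 := by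
  obtain ⟨m, rfl⟩ : ∃ m, n = m + 1 := ⟨n - 1, (Nat.succ_pred_eq_of_pos hn).symm⟩
  have hint : ∀ μ : Measure (Fin (m + 1) → A), IsProbabilityMeasure μ → Integrable χ μ := by
    intro μ _
    refine Integrable.mono' (integrable_const 1) hχ.aestronglyMeasurable ?_
    filter_upwards with x
    rw [Real.norm_eq_abs, abs_le]
    exact ⟨le_trans (by norm_num) (hχ0 x), hχ1 x⟩
  -- χ = 0 a.e. wrt φ^n
  have hφae : χ =ᵐ[Measure.pi fun _ : Fin (m + 1) => φ] 0 :=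
    (integral_eq_zero_iff_of_nonneg hχ0 (hint _ inferInstance)).mp h0
  -- 1 - χ = 0 a.e. wrt ψ^n
  have hψae : (fun x => 1 - χ x) =ᵐ[Measure.pi fun _ : Fin (m + 1) => ψ] 0 := by
    refine (integral_eq_zero_iff_of_nonneg (fun x => by simpa using sub_nonneg.mpr (hχ1 x)) ?_).mp ?_
    · exact (integrable_const 1).sub (hint _ inferInstance)
    · rw [integral_sub (integrable_const 1) (hint _ inferInstance), h1,
        integral_const, probReal_univ]
      simp
  set S : Set (Fin (m + 1) → A) := χ ⁻¹' {1} with hSdef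
  have hSm : MeasurableSet S := hχ (measurableSet_singleton 1)
  have hφS : (Measure.pi fun _ : Fin (m + 1) => φ) S = 0 := by
    refine measure_mono_null ?_ hφae
    intro x hx
    simp only [hSdef, Set.mem_preimage, Set.mem_singleton_iff] at hx
    simp [hx]
  have hψS : (Measure.pi fun _ : Fin (m + 1) => ψ) S = 1 := by
    rw [← prob_compl_eq_zero_iff hSm]
    rw [Filter.EventuallyEq, ae_iff] at hψae
    refine measure_mono_null ?_ hψae
    intro x hx
    simp only [hSdef, Set.mem_compl_iff, Set.mem_preimage, Set.mem_singleton_iff] at hx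
    simp only [Set.mem_setOf_eq, Pi.zero_apply]
    intro h
    exact hx (by linarith)
  obtain ⟨T, hTm, hTφ, hTψ⟩ := key_aux m φ ψ inferInstance inferInstance S hSm hφS hψS
  refine ⟨T.indicator 1, measurable_one.indicator hTm, ?_, ?_, ?_, ?_⟩
  · intro a; exact Set.indicator_nonneg (fun _ _ => zero_le_one) a
  · intro a; exact Set.indicator_le_self' (fun _ _ => zero_le_one) a |>.trans (by
      by_cases h : a ∈ T <;> simp [Set.indicator_apply, h])
  · rw [integral_indicator_one hTm, measureReal_def, hTφ]; simp
  · rw [integral_indicator_one hTm, measureReal_def, hTψ]; simp
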